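/- (Asymptotic conditional coverage of WACI; main theorem.) Let n ≥ 1, γ > 0, λ ∈ (0,1), α* ∈ (0,1). Let idx : ℕ → {1, …, n}, let (err_t)_{t≥1} be a sequence with err_t ∈ {0,1} for every t, and let (α_t)_{t≥1} be a sequence of vectors in ℝ^n satisfying α_{t+1}[j] = α_t[j] + γ·λ^{|idx(t) − j|}·(α* − err_t) for every t ≥ 1 and j ∈ {1, …, n}. Assume there exists ν ∈ ℕ such that α_t[j] ∈ [−ν, 1+ν] for every t ≥ 1 and j ∈ {1, …, n}. Fix i ∈ {1, …, n} such that idx(t) = i for infinitely many t, and for T ≥ 1 let T_i(T) = #{t ≤ T : idx(t) = i}. Then (1/T_i(T))·Σ_{t ≤ T, idx(t) = i} err_t → α* as T → ∞. -/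

import Mathlib

lemma kms_inverse_row (n : ℕ) (lam : ℝ) (hl0 : 0 < lam) (hl1 : lam < 1) (i : Fin n) :
    ∃ c : Fin n → ℝ, ∀ m : Fin n,
      ∑ j : Fin n, c j * lam ^ ((m : ℤ) - (j : ℤ)).natAbs = if m = i then 1 else 0 := by
  have hD : (0:ℝ) < 1 - lam ^ 2 := by nlinarith
  set A : ℝ := 1 - lam^2 + (if 0 < i.val then lam^2 else 0) + (if i.val + 1 < n then lam^2 else 0)
    with hA
  refine ⟨fun j => ((if j = i then A else 0) + (if (j:ℤ) = (i:ℤ) - 1 then -lam else 0)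
      + (if (j:ℤ) = (i:ℤ) + 1 then -lam else 0)) / (1 - lam^2), fun m => ?_⟩
  set P : Fin n → ℝ := fun j => lam ^ ((m : ℤ) - (j : ℤ)).natAbs with hP
  have hiL : i.val - 1 < n := by omega
  have hiR : min (i.val + 1) (n-1) < n := by omega
  set iL : Fin n := ⟨i.val - 1, hiL⟩ with hiLdef
  set iR : Fin n := ⟨min (i.val + 1) (n-1), hiR⟩ with hiRdef
  have h1 : ∑ j : Fin n, (if j = i then A else 0) * P j = A * P i := by
    simp [ite_mul]
  have h2 : ∑ j : Fin n, (if (j:ℤ) = (i:ℤ) - 1 then -lam else 0) * P j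
      = if 0 < i.val then -lam * P iL else 0 := by
    by_cases h : 0 < i.val
    · have heq : ∀ j : Fin n, ((j:ℤ) = (i:ℤ) - 1) ↔ j = iL := by
        intro j; rw [Fin.ext_iff]; simp [hiLdef]; omega
      simp_rw [heq]
      simp [ite_mul, h]
    · have heq : ∀ j : Fin n, ¬ ((j:ℤ) = (i:ℤ) - 1) := by
        intro j; omega
      simp [heq, h]
  have h3 : ∑ j : Fin n, (if (j:ℤ) = (i:ℤ) + 1 then -lam else 0) * P j
      = if i.val + 1 < n then -lam * P iR else 0 := by
    by_cases h : i.val + 1 < n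
    · have heq : ∀ j : Fin n, ((j:ℤ) = (i:ℤ) + 1) ↔ j = iR := by
        intro j; rw [Fin.ext_iff]; simp [hiRdef]; omega
      simp_rw [heq]
      simp [ite_mul, h]
    · have heq : ∀ j : Fin n, ¬ ((j:ℤ) = (i:ℤ) + 1) := by
        intro j; have := j.isLt; omega
      simp [heq, h]
  have expand : ∑ j : Fin n, ((if j = i then A else 0) + (if (j:ℤ) = (i:ℤ) - 1 then -lam else 0)
      + (if (j:ℤ) = (i:ℤ) + 1 then -lam else 0)) / (1 - lam^2) * P j
      = (A * P i + (if 0 < i.val then -lam * P iL else 0)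
          + (if i.val + 1 < n then -lam * P iR else 0)) / (1 - lam^2) := by
    rw [← h1, ← h2, ← h3, ← Finset.sum_add_distrib, ← Finset.sum_add_distrib, Finset.sum_div]
    exact Finset.sum_congr rfl fun j _ => by ring
  rw [expand, div_eq_iff hD.ne']
  rcases lt_trichotomy m.val i.val with hm | hm | hm
  · -- m < i
    have hL : 0 < i.val := by omega
    have hni : m ≠ i := Fin.ne_of_val_ne (by omega)
    obtain ⟨b, hb⟩ : ∃ b, ((m:ℤ) - (i:ℤ)).natAbs = b + 1 := ⟨i.val - m.val - 1, by omega⟩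
    have hdL : ((m:ℤ) - (iL:ℤ)).natAbs = b := by simp [hiLdef]; omega
    have hdR : i.val + 1 < n → ((m:ℤ) - (iR:ℤ)).natAbs = b + 2 := by
      intro h; simp [hiRdef]; omega
    simp only [hP, hb, hdL, if_neg hni, hA, if_pos hL]
    by_cases h : i.val + 1 < n
    · simp only [if_pos h, hdR h]; ring
    · simp only [if_neg h]; ring
  · -- m = i
    have hmi : m = i := Fin.ext hm
    have hd0 : ((m:ℤ) - (i:ℤ)).natAbs = 0 := by omega
    have hdL : 0 < i.val → ((m:ℤ) - (iL:ℤ)).natAbs = 1 := by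
      intro h; simp [hiLdef]; omega
    have hdR : i.val + 1 < n → ((m:ℤ) - (iR:ℤ)).natAbs = 1 := by
      intro h; simp [hiRdef]; omega
    simp only [hP, hd0, if_pos hmi, hA]
    by_cases h : 0 < i.val <;> by_cases h' : i.val + 1 < n
    · simp only [if_pos h, if_pos h', hdL h, hdR h']; ring
    · simp only [if_pos h, if_neg h', hdL h]; ring
    · simp only [if_neg h, if_pos h', hdR h']; ring
    · simp only [if_neg h, if_neg h']; ring
  · -- m > i
    have hR : i.val + 1 < n := by have := m.isLt; omega
    have hni : m ≠ i := Fin.ne_of_val_ne (by omega)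
    obtain ⟨b, hb⟩ : ∃ b, ((m:ℤ) - (i:ℤ)).natAbs = b + 1 := ⟨m.val - i.val - 1, by omega⟩
    have hdR : ((m:ℤ) - (iR:ℤ)).natAbs = b := by simp [hiRdef]; omega
    have hdL : 0 < i.val → ((m:ℤ) - (iL:ℤ)).natAbs = b + 2 := by
      intro h; simp [hiLdef]; omega
    simp only [hP, hb, hdR, if_neg hni, hA, if_pos hR]
    by_cases h : 0 < i.val
    · simp only [if_pos h, hdL h]; ring
    · simp only [if_neg h]; ring


open Filter

/-- Asymptotic conditional coverage of WACI (main theorem). -/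
theorem stmt_13 (n : ℕ) (hn : 1 ≤ n) (γ lam αstar : ℝ) (hγ : 0 < γ)
    (hlam : lam ∈ Set.Ioo (0 : ℝ) 1) (hαstar : αstar ∈ Set.Ioo (0 : ℝ) 1)
    (idx : ℕ → Fin n) (err : ℕ → ℝ)
    (herr : ∀ t, 1 ≤ t → err t = 0 ∨ err t = 1)
    (α : ℕ → Fin n → ℝ)
    (hrec : ∀ t, 1 ≤ t → ∀ j : Fin n,
      α (t + 1) j = α t j + γ * lam ^ ((idx t : ℤ) - (j : ℤ)).natAbs * (αstar - err t))
    (ν : ℕ) (hbound : ∀ t, 1 ≤ t → ∀ j : Fin n, α t j ∈ Set.Icc (-(ν : ℝ)) (1 + ν))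
    (i : Fin n) (hinf : {t : ℕ | 1 ≤ t ∧ idx t = i}.Infinite) :
    Tendsto (fun T : ℕ =>
        (∑ t ∈ (Finset.Icc 1 T).filter (fun t => idx t = i), err t) /
          (((Finset.Icc 1 T).filter (fun t => idx t = i)).card : ℝ))
      atTop (nhds αstar) := by
  obtain ⟨hl0, hl1⟩ := hlam
  obtain ⟨c, hc⟩ := kms_inverse_row n lam hl0 hl1 i
  set S : Fin n → ℕ → ℝ := fun j T =>
    ∑ t ∈ Finset.Icc 1 T, lam ^ ((idx t : ℤ) - (j : ℤ)).natAbs * (αstar - err t) with hS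
  set N : ℕ → ℕ := fun T => ((Finset.Icc 1 T).filter (fun t => idx t = i)).card with hN
  set E : ℕ → ℝ := fun T => ∑ t ∈ (Finset.Icc 1 T).filter (fun t => idx t = i), err t with hE
  -- telescoping
  have htel : ∀ T : ℕ, ∀ j : Fin n, α (T + 1) j = α 1 j + γ * S j T := by
    intro T
    induction T with
    | zero => intro j; simp [hS]
    | succ T ih =>
      intro j
      rw [hrec (T + 1) (by omega) j, ih j]
      simp only [hS]
      rw [Finset.sum_Icc_succ_top (by omega : 1 ≤ T + 1)]
      ring
  -- boundedness of S
  have hSbound : ∀ (T : ℕ) (j : Fin n), |S j T| ≤ (1 + 2 * ν) / γ := by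
    intro T j
    have h1 := hbound (T + 1) (by omega) j
    have h2 := hbound 1 le_rfl j
    simp only [Set.mem_Icc] at h1 h2
    have heq : S j T = (α (T + 1) j - α 1 j) / γ := by
      rw [htel T j]; field_simp; ring
    rw [heq, abs_div, abs_of_pos hγ]
    have habs : |α (T + 1) j - α 1 j| ≤ 1 + 2 * ν := by
      rw [abs_le]; constructor <;> linarith
    exact div_le_div_of_nonneg_right habs hγ.le
  -- key identity
  have hkey : ∀ T : ℕ, αstar * N T - E T = ∑ j : Fin n, c j * S j T := by
    intro T
    simp only [hS]
    simp_rw [Finset.mul_sum]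
    rw [Finset.sum_comm]
    have : ∀ t ∈ Finset.Icc 1 T,
        (∑ j : Fin n, c j * (lam ^ ((idx t : ℤ) - (j : ℤ)).natAbs * (αstar - err t)))
          = (if idx t = i then (1:ℝ) else 0) * (αstar - err t) := by
      intro t _
      simp_rw [← mul_assoc]
      rw [← Finset.sum_mul, hc (idx t)]
    rw [Finset.sum_congr rfl this]
    simp_rw [ite_mul, zero_mul, one_mul]
    rw [Finset.sum_ite, Finset.sum_const_zero, add_zero, Finset.sum_sub_distrib,
      Finset.sum_const, nsmul_eq_mul]
    simp only [hN, hE]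
    ring
  set K : ℝ := (∑ j : Fin n, |c j|) * ((1 + 2 * ν) / γ) with hK
  have hEN : ∀ T : ℕ, |αstar * N T - E T| ≤ K := by
    intro T
    rw [hkey T]
    calc |∑ j : Fin n, c j * S j T| ≤ ∑ j : Fin n, |c j * S j T| :=
          Finset.abs_sum_le_sum_abs _ _
      _ ≤ ∑ j : Fin n, |c j| * ((1 + 2 * ν) / γ) := by
          apply Finset.sum_le_sum
          intro j _
          rw [abs_mul]
          exact mul_le_mul_of_nonneg_left (hSbound T j) (abs_nonneg _)
      _ = K := by rw [hK, Finset.sum_mul]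
  -- N tends to infinity
  have hNmono : ∀ b : ℕ, ∃ T0 : ℕ, ∀ T ≥ T0, b ≤ N T := by
    intro b
    obtain ⟨s, hs_sub, hs_card⟩ := hinf.exists_subset_card_eq b
    refine ⟨s.sup id, fun T hT => ?_⟩
    rw [← hs_card]
    apply Finset.card_le_card
    intro x hx
    have hx' := hs_sub hx
    simp only [Set.mem_setOf_eq] at hx'
    simp only [Finset.mem_filter, Finset.mem_Icc]
    exact ⟨⟨hx'.1, le_trans (Finset.le_sup (f := id) hx) hT⟩, hx'.2⟩
  have hNtop : Tendsto (fun T => (N T : ℝ)) atTop atTop := by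
    apply tendsto_natCast_atTop_atTop.comp
    exact tendsto_atTop_atTop.2 fun b => (hNmono b).imp fun T0 h T hT => h T hT
  have hKN : Tendsto (fun T => K / (N T : ℝ)) atTop (nhds 0) :=
    tendsto_const_nhds.div_atTop hNtop
  have hzero : Tendsto (fun T => E T / (N T : ℝ) - αstar) atTop (nhds 0) := by
    apply squeeze_zero_norm' ?_ hKN
    filter_upwards [hNtop.eventually_ge_atTop 1] with T hT
    have hNpos : (0:ℝ) < (N T : ℝ) := by linarith
    have : E T / (N T : ℝ) - αstar = -((αstar * N T - E T) / (N T : ℝ)) := by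
      field_simp
      ring
    rw [Real.norm_eq_abs, this, abs_neg, abs_div, abs_of_pos hNpos]
    exact div_le_div_of_nonneg_right (hEN T) hNpos.le
  have := hzero.add_const αstar
  simp only [sub_add_cancel, zero_add] at this
  exact this
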